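/- Let m ≥ 2 and let γ be a primitive element of F_{2^m} with 3 | 2^m - 1. For a ∈ F_{2^m}, let N(a) be the number of zeros among the three values Tr(a), Tr(a γ^{(2^m-1)/3}), Tr(a γ^{2(2^m-1)/3}). Then as a ranges over F_{2^m}: N(a) = 3 for exactly 2^{m-2} elements a, and N(a) = 1 for exactly 3·2^{m-2} elements a; in particular N(a) is never 0 or 2. -/

import Mathlib

open Finset
open scoped Classical

noncomputable instance (m : ℕ) : Fintype (GaloisField 2 m) := Fintype.ofFinite _

/-- Absolute trace from `GF(2^m)` to `F_2`. -/
noncomputable def Tr (m : ℕ) : GaloisField 2 m → ZMod 2 :=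
  Algebra.trace (ZMod 2) (GaloisField 2 m)

/-- Walsh transform `W_f(a,b) = Σ_x (-1)^{Tr(a f(x) + b x)}`. -/
noncomputable def Walsh (m : ℕ) (f : GaloisField 2 m → GaloisField 2 m)
    (a b : GaloisField 2 m) : ℤ :=
  ∑ x : GaloisField 2 m, (-1 : ℤ) ^ (Tr m (a * f x + b * x)).val

/-- Distribution of the number of zero traces among `Tr(a), Tr(aω), Tr(aω²)`. -/
theorem stmt4 (m : ℕ) (hm : 2 ≤ m) (h3 : 3 ∣ 2 ^ m - 1)
    (γ : GaloisField 2 m) (hγ : orderOf γ = 2 ^ m - 1)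
    (N : GaloisField 2 m → ℕ)
    (hN : ∀ a, N a = (if Tr m a = 0 then 1 else 0)
      + (if Tr m (a * γ ^ ((2 ^ m - 1) / 3)) = 0 then 1 else 0)
      + (if Tr m (a * γ ^ (2 * ((2 ^ m - 1) / 3))) = 0 then 1 else 0)) :
    (Finset.univ.filter (fun a : GaloisField 2 m => N a = 3)).card = 2 ^ (m - 2)
    ∧ (Finset.univ.filter (fun a : GaloisField 2 m => N a = 1)).card = 3 * 2 ^ (m - 2)
    ∧ ∀ a : GaloisField 2 m, N a ≠ 0 ∧ N a ≠ 2 := by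
  classical
  have hcard : Fintype.card (GaloisField 2 m) = 2 ^ m := by
    rw [← Nat.card_eq_fintype_card]; exact GaloisField.card 2 m (by omega)
  have h4 : 2 ^ m = 4 * 2 ^ (m - 2) := by
    conv_lhs => rw [show m = m - 2 + 2 by omega]
    rw [pow_add]; ring
  set k := (2 ^ m - 1) / 3 with hkdef
  have hk3 : 3 * k = 2 ^ m - 1 := Nat.mul_div_cancel' h3
  have h2m : 3 ≤ 2 ^ m - 1 := by
    have : 4 ≤ 2 ^ m := by calc 4 = 2 ^ 2 := rfl
                                _ ≤ 2 ^ m := Nat.pow_le_pow_right (by norm_num) hm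
    omega
  have hkpos : 0 < k := by omega
  have hklt : k < 2 ^ m - 1 := by omega
  set ω : GaloisField 2 m := γ ^ k with hωdef
  have hω3 : ω ^ 3 = 1 := by
    rw [hωdef, ← pow_mul, mul_comm, hk3, ← hγ]
    exact pow_orderOf_eq_one γ
  have hωne : ω ≠ 1 := by
    intro h
    have := orderOf_dvd_of_pow_eq_one (hωdef ▸ h)
    rw [hγ] at this
    exact absurd (Nat.le_of_dvd hkpos this) (by omega)
  have hsum : (1 : GaloisField 2 m) + ω + ω ^ 2 = 0 := by
    have h : (ω - 1) * (ω ^ 2 + ω + 1) = 0 := by linear_combination hω3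
    rcases mul_eq_zero.mp h with h' | h'
    · exact absurd (sub_eq_zero.mp h') hωne
    · linear_combination h'
  have hω2 : γ ^ (2 * k) = ω ^ 2 := by rw [hωdef, ← pow_mul, mul_comm]
  have htr_add : ∀ x y : GaloisField 2 m, Tr m (x + y) = Tr m x + Tr m y := fun x y => by
    simp [Tr, map_add]
  have htr0 : Tr m (0 : GaloisField 2 m) = 0 := by simp [Tr]
  have htr3 : ∀ a : GaloisField 2 m, Tr m a + Tr m (a * ω) + Tr m (a * ω ^ 2) = 0 := by
    intro a
    have heq : a + a * ω + a * ω ^ 2 = 0 := by linear_combination a * hsum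
    calc Tr m a + Tr m (a * ω) + Tr m (a * ω ^ 2)
        = Tr m (a + a * ω + a * ω ^ 2) := by rw [htr_add, htr_add]
      _ = 0 := by rw [heq, htr0]
  have h01 : ∀ x : ZMod 2, x = 0 ∨ x = 1 := by decide
  have htrex : ∀ c : GaloisField 2 m, c ≠ 0 → ∃ b, Tr m (b * c) = 1 := by
    intro c hc
    have hnd := (traceForm_nondegenerate (ZMod 2) (GaloisField 2 m)).1 c
    simp_rw [Algebra.traceForm_apply] at hnd
    by_contra hf
    push_neg at hf
    apply hc
    apply hnd
    intro y
    rw [mul_comm]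
    rcases h01 (Tr m (y * c)) with h | h
    · exact h
    · exact absurd h (hf y)
  let φ : GaloisField 2 m →+ ZMod 2 × ZMod 2 :=
    AddMonoidHom.mk' (fun a => (Tr m a, Tr m (a * ω)))
      (by intro a b; simp [htr_add, add_mul, Prod.ext_iff])
  have hφ : ∀ a, φ a = (Tr m a, Tr m (a * ω)) := fun a => rfl
  have hωne0 : ω ≠ 0 := by
    intro h; rw [h] at hω3; simp at hω3
  have h1ω : (1 : GaloisField 2 m) + ω ≠ 0 := by
    intro h
    have : (1 : GaloisField 2 m) = 0 := by linear_combination hsum - ω * h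
    exact one_ne_zero this
  obtain ⟨u, hu⟩ := htrex 1 one_ne_zero
  obtain ⟨v, hv⟩ := htrex ω hωne0
  obtain ⟨w, hw⟩ := htrex (1 + ω) h1ω
  rw [mul_one] at hu
  have hw' : Tr m w + Tr m (w * ω) = 1 := by
    rw [← htr_add, show w + w * ω = w * (1 + ω) by ring]
    exact hw
  have hsurj : Function.Surjective φ := by
    have h10 : ∃ a, φ a = (1, 0) := by
      rcases h01 (Tr m (w * ω)) with h | h
      · refine ⟨w, ?_⟩
        have hw1 : Tr m w = 1 := by
          rcases h01 (Tr m w) with h' | h'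
          · rw [h', h] at hw'; simp at hw'
          · exact h'
        rw [hφ, h, hw1]
      · have hw0 : Tr m w = 0 := by
          rcases h01 (Tr m w) with h' | h'
          · exact h'
          · rw [h', h] at hw'; exact absurd hw' (by decide)
        rcases h01 (Tr m (u * ω)) with h2 | h2
        · exact ⟨u, by rw [hφ, hu, h2]⟩
        · refine ⟨u + w, ?_⟩
          rw [hφ]
          rw [htr_add, add_mul, htr_add, hu, hw0, h2, h]
          decide
    have h01' : ∃ a, φ a = (0, 1) := by
      rcases h01 (Tr m w) with h | h
      · refine ⟨w, ?_⟩
        have : Tr m (w * ω) = 1 := by rw [h] at hw'; simpa using hw'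
        rw [hφ, h, this]
      · have hw1 : Tr m (w * ω) = 0 := by
          rw [h] at hw'
          rcases h01 (Tr m (w * ω)) with h' | h'
          · exact h'
          · rw [h'] at hw'; exact absurd hw' (by decide)
        rcases h01 (Tr m v) with h2 | h2
        · exact ⟨v, by rw [hφ, hv, h2]⟩
        · refine ⟨v + w, ?_⟩
          rw [hφ]
          rw [htr_add, add_mul, htr_add, hv, hw1, h2, h]
          decide
    obtain ⟨a1, ha1⟩ := h10
    obtain ⟨a2, ha2⟩ := h01'
    rintro ⟨x, y⟩
    rcases h01 x with hx | hx <;> rcases h01 y with hy | hy <;> subst hx <;> subst hy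
    · exact ⟨0, by simp; rfl⟩
    · exact ⟨a2, ha2⟩
    · exact ⟨a1, ha1⟩
    · refine ⟨a1 + a2, ?_⟩
      rw [map_add, ha1, ha2]
      decide
  have hker : Nat.card φ.ker = 2 ^ (m - 2) := by
    have hq := AddSubgroup.card_eq_card_quotient_mul_card_addSubgroup φ.ker
    have hequiv := QuotientAddGroup.quotientKerEquivOfSurjective φ hsurj
    have hqc : Nat.card (GaloisField 2 m ⧸ φ.ker) = 4 := by
      rw [Nat.card_congr hequiv.toEquiv]
      simp [Nat.card_eq_fintype_card, ZMod.card]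
    rw [hqc, Nat.card_eq_fintype_card, hcard] at hq
    omega
  have key : ∀ x y z : ZMod 2, x + y + z = 0 →
      (((if x = 0 then 1 else 0) + (if y = 0 then 1 else 0) + (if z = 0 then 1 else 0) : ℕ) = 3
        ↔ x = 0 ∧ y = 0)
      ∧ (((if x = 0 then 1 else 0) + (if y = 0 then 1 else 0) + (if z = 0 then 1 else 0) : ℕ) = 3
        ∨ ((if x = 0 then 1 else 0) + (if y = 0 then 1 else 0) + (if z = 0 then 1 else 0) : ℕ) = 1) := by
    decide
  have hNval : ∀ a, (N a = 3 ↔ φ a = 0) ∧ (N a = 3 ∨ N a = 1) := by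
    intro a
    have hna : N a = (if Tr m a = 0 then 1 else 0) + (if Tr m (a * ω) = 0 then 1 else 0)
        + (if Tr m (a * ω ^ 2) = 0 then 1 else 0) := by
      rw [hN a, hω2]
    have hkey := key _ _ _ (htr3 a)
    rw [hna]
    refine ⟨?_, hkey.2⟩
    rw [hkey.1, hφ, Prod.ext_iff]
    simp
  have hfilter3 : (Finset.univ.filter (fun a : GaloisField 2 m => N a = 3)).card = 2 ^ (m - 2) := by
    have heq : (Finset.univ.filter (fun a : GaloisField 2 m => N a = 3)) =
        (Finset.univ.filter (fun a : GaloisField 2 m => φ a = 0)) := by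
      apply Finset.filter_congr
      intro a _
      simp [(hNval a).1]
    rw [heq, ← Fintype.card_subtype, ← hker, Nat.card_eq_fintype_card]
    apply Fintype.card_congr
    exact (Equiv.subtypeEquivRight (fun a => by simp [AddMonoidHom.mem_ker])).symm
  refine ⟨hfilter3, ?_, ?_⟩
  · have hcompl : (Finset.univ.filter (fun a : GaloisField 2 m => N a = 1)) =
        Finset.univ \ (Finset.univ.filter (fun a : GaloisField 2 m => N a = 3)) := by
      ext a
      simp only [Finset.mem_filter, Finset.mem_sdiff, Finset.mem_univ, true_and]
      rcases (hNval a).2 with h | h <;> simp [h]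
    rw [hcompl, Finset.card_sdiff_of_subset (Finset.filter_subset _ _), hfilter3, Finset.card_univ, hcard]
    omega
  · intro a
    rcases (hNval a).2 with h | h <;> omega
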